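/- Let u ∈ S_n, and for each box (i,j) of the dual Rothe diagram Rothe(u) = {(i,j) : u(i) < j and u⁻¹(j) > i}, associate the simple transposition s_{i+h-1} where h is the position of the box counted from the right within the boxes of row i of Rothe(u). Let s_{i₁}, s_{i₂}, ..., s_{i_m} be the sequence of associated transpositions read row by row from bottom to top and within each row from right to left, and set x = s_{i₁} s_{i₂} ⋯ s_{i_m}. Then u · x = w₀ (the longest permutation), and this expression for x is reduced, i.e., m = ℓ(x). -/

import Mathlib

/-- The number of inversions (Coxeter length) of a permutation of `Fin n`. -/
def invCount {n : ℕ} (σ : Equiv.Perm (Fin n)) : ℕ :=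
  (Finset.univ.filter (fun p : Fin n × Fin n => p.1 < p.2 ∧ σ p.2 < σ p.1)).card

/-- The simple transposition `s_{t+1} = (t+1, t+2)` (1-indexed), i.e. the swap of the
0-indexed elements `t` and `t+1` of `Fin n` (the identity if out of range). -/
def sPerm (n : ℕ) (t : ℕ) : Equiv.Perm (Fin n) :=
  if h : t + 1 < n then Equiv.swap ⟨t, Nat.lt_of_succ_lt h⟩ ⟨t + 1, h⟩ else 1

/-- The number of boxes of row `i` (0-indexed) of the dual Rothe diagram
`Rothe(u) = {(i,j) : u i < j ∧ i < u⁻¹ j}`. -/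
def rotheRowLen {n : ℕ} (u : Equiv.Perm (Fin n)) (i : Fin n) : ℕ :=
  (Finset.univ.filter (fun j : Fin n => u i < j ∧ i < u⁻¹ j)).card

/-- The word of simple transpositions associated to the boxes of `Rothe(u)`, read
row by row from bottom to top and within each row from right to left: the box of
row `i` (0-indexed) in position `h` from the right carries the simple transposition
`s_{(i+1)+h-1}` (1-indexed), i.e. `sPerm n (i + (h-1))`. -/
def rotheWord {n : ℕ} (u : Equiv.Perm (Fin n)) : List (Equiv.Perm (Fin n)) :=
  (((List.finRange n).reverse).map (fun i =>
    (List.range (rotheRowLen u i)).map (fun h => sPerm n (i.val + h)))).flatten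

namespace RWaux

open Finset

variable {n : ℕ}

def cyc (n : ℕ) (k r : ℕ) : Equiv.Perm (Fin n) :=
  ((List.range r).map (fun h => sPerm n (k + h))).prod

def ρ (u : Equiv.Perm (Fin n)) (k : ℕ) : ℕ :=
  if h : k < n then rotheRowLen u ⟨k, h⟩ else 0

def row (u : Equiv.Perm (Fin n)) (k : ℕ) : List (Equiv.Perm (Fin n)) :=
  (List.range (ρ u k)).map (fun h => sPerm n (k + h))

def sw (u : Equiv.Perm (Fin n)) (k : ℕ) : List (Equiv.Perm (Fin n)) :=
  ((List.range' k (n - k)).reverse.map (row u)).flatten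

lemma sPerm_apply_of_ne {t : ℕ} {z : Fin n} (h1 : z.val ≠ t) (h2 : z.val ≠ t + 1) :
    sPerm n t z = z := by
  unfold sPerm
  split
  · exact Equiv.swap_apply_of_ne_of_ne (Fin.ne_of_val_ne h1) (Fin.ne_of_val_ne h2)
  · rfl

lemma sPerm_left {t : ℕ} (h : t + 1 < n) : sPerm n t ⟨t, Nat.lt_of_succ_lt h⟩ = ⟨t + 1, h⟩ := by
  unfold sPerm
  rw [dif_pos h]
  exact Equiv.swap_apply_left _ _

lemma sPerm_right {t : ℕ} (h : t + 1 < n) : sPerm n t ⟨t + 1, h⟩ = ⟨t, Nat.lt_of_succ_lt h⟩ := by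
  unfold sPerm
  rw [dif_pos h]
  exact Equiv.swap_apply_right _ _

lemma cyc_zero (k : ℕ) : cyc n k 0 = 1 := by simp [cyc]

lemma cyc_succ (k r : ℕ) : cyc n k (r + 1) = cyc n k r * sPerm n (k + r) := by
  unfold cyc
  rw [List.range_succ, List.map_append, List.prod_append]
  simp

lemma cyc_fix {k r : ℕ} {z : Fin n} (h : z.val < k ∨ k + r < z.val) : cyc n k r z = z := by
  induction r with
  | zero => rw [cyc_zero]; rfl
  | succ r ih =>
      rw [cyc_succ, Equiv.Perm.mul_apply, sPerm_apply_of_ne (by omega) (by omega)]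
      exact ih (by omega)

lemma cyc_mid {k r : ℕ} {z : Fin n} (h1 : k ≤ z.val) (h2 : z.val < k + r) (hn : k + r < n) :
    (cyc n k r z).val = z.val + 1 := by
  induction r with
  | zero => omega
  | succ r ih =>
      rw [cyc_succ, Equiv.Perm.mul_apply]
      rcases Nat.lt_or_ge z.val (k + r) with h | h
      · rw [sPerm_apply_of_ne (by omega) (by omega)]
        exact ih h (by omega)
      · have hzv : z.val = k + r := by omega
        have hz : z = ⟨k + r, by omega⟩ := Fin.ext (by simpa using hzv)
        rw [hz, sPerm_left (by omega), cyc_fix (Or.inr (by simp))]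

lemma cyc_top {k r : ℕ} {z : Fin n} (h : z.val = k + r) (hn : k + r < n) :
    (cyc n k r z).val = k := by
  induction r generalizing z with
  | zero => rw [cyc_zero]; simpa using h
  | succ r ih =>
      rw [cyc_succ, Equiv.Perm.mul_apply]
      have hz : z = ⟨k + r + 1, by omega⟩ := Fin.ext (by show z.val = k + r + 1; omega)
      rw [hz, sPerm_right (by omega)]
      exact ih (by simp) (by omega)

lemma sw_n (u : Equiv.Perm (Fin n)) : sw u n = [] := by simp [sw]

lemma sw_step (u : Equiv.Perm (Fin n)) {k : ℕ} (hk : k < n) :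
    sw u k = sw u (k + 1) ++ row u k := by
  unfold sw
  have h : n - k = (n - (k + 1)) + 1 := by omega
  rw [h, List.range'_succ, List.reverse_cons, List.map_append, List.flatten_append]
  simp

lemma rotheWord_eq_sw (u : Equiv.Perm (Fin n)) : rotheWord u = sw u 0 := by
  unfold rotheWord sw row
  rw [Nat.sub_zero, ← List.range_eq_range', ← (show (List.finRange n).map Fin.val = List.range n from
    List.ext_getElem (by simp) (by simp))]
  simp only [List.map_reverse, List.map_map]
  congr 1
  congr 1
  apply List.map_congr_left
  intro i _
  simp [ρ, Function.comp, i.isLt]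

lemma rowLen_eq (u : Equiv.Perm (Fin n)) (k : Fin n) :
    rotheRowLen u k = (univ.filter (fun t : Fin n => k < t ∧ u k < u t)).card := by
  unfold rotheRowLen
  apply Finset.card_bij' (fun j _ => u⁻¹ j) (fun t _ => u t)
  · intro j hj
    simp only [mem_filter, mem_univ, true_and] at hj ⊢
    exact ⟨hj.2, by simpa using hj.1⟩
  · intro t ht
    simp only [mem_filter, mem_univ, true_and] at ht ⊢
    exact ⟨ht.2, by simpa using ht.1⟩
  · intro j _; simp
  · intro t _; simp

lemma rowLen_lt (u : Equiv.Perm (Fin n)) (k : Fin n) : k.val + rotheRowLen u k < n := by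
  rw [rowLen_eq]
  have hsub : (univ.filter (fun t : Fin n => k < t ∧ u k < u t)) ⊆ Finset.Ioi k := by
    intro t ht
    simp only [mem_filter] at ht
    simpa using ht.2.1
  have h1 := Finset.card_le_card hsub
  rw [Fin.card_Ioi] at h1
  have h2 := k.isLt
  omega

lemma strictMono_fin_le {f : Fin n → Fin n} (hf : StrictMono f) (i : Fin n) :
    i.val ≤ (f i).val := by
  have key : ∀ m, ∀ i : Fin n, i.val = m → m ≤ (f i).val := by
    intro m
    induction m with
    | zero => exact fun i _ => Nat.zero_le _
    | succ m ih =>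
        intro i hi
        have hm : m < n := by omega
        have hlt : (⟨m, hm⟩ : Fin n) < i := by
          rw [Fin.lt_def]; simpa using by omega
        have h1 := hf hlt
        have h2 := ih ⟨m, hm⟩ rfl
        rw [Fin.lt_def] at h1
        omega
  exact key i.val i rfl

lemma eq_revPerm (v : Equiv.Perm (Fin n)) (hv : ∀ a b : Fin n, a < b → v b < v a) :
    v = Fin.revPerm := by
  have hmono : StrictMono (fun j : Fin n => (v j).rev) :=
    fun a b hab => Fin.rev_lt_rev.mpr (hv a b hab)
  set e : Equiv.Perm (Fin n) := v.trans Fin.revPerm with he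
  have hemono : StrictMono (fun j : Fin n => e j) := hmono
  have hsymm : StrictMono (fun j : Fin n => e.symm j) := by
    intro a b hab
    rcases lt_trichotomy (e.symm a) (e.symm b) with h | h | h
    · exact h
    · exact absurd (e.symm.injective h) hab.ne
    · have := hemono h
      simp only [Equiv.apply_symm_apply] at this
      exact absurd this (lt_asymm hab)
  have h1 := strictMono_fin_le hemono
  have h2 := strictMono_fin_le hsymm
  have he_id : ∀ i, e i = i := by
    intro i
    have ha := h2 (e i)
    simp only [Equiv.symm_apply_apply] at ha
    exact Fin.ext (le_antisymm ha (h1 i))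
  apply Equiv.ext
  intro i
  have := he_id i
  simp only [he, Equiv.trans_apply, Fin.revPerm_apply] at this
  rw [Fin.revPerm_apply, ← Fin.rev_rev (v i), this]

lemma main_inv (u : Equiv.Perm (Fin n)) :
    ∀ d k, k + d = n →
      (∀ j : Fin n, j.val < k → (u * (sw u k).prod) j = u j) ∧
      (∀ a b : Fin n, k ≤ a.val → a < b →
        (u * (sw u k).prod) b < (u * (sw u k).prod) a) := by
  intro d
  induction d with
  | zero =>
      intro k hk
      have hkn : k = n := by omega
      subst hkn
      rw [sw_n, List.prod_nil, mul_one]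
      exact ⟨fun j _ => rfl, fun a b ha _ => absurd a.isLt (by omega)⟩
  | succ d ih =>
      intro k hk
      have hkn : k < n := by omega
      obtain ⟨ha, hb⟩ := ih (k + 1) (by omega)
      set w := u * (sw u (k + 1)).prod with hw
      set r := rotheRowLen u ⟨k, hkn⟩ with hr
      have hrn : k + r < n := by
        have := rowLen_lt u ⟨k, hkn⟩
        rw [← hr] at this
        simpa using this
      have hprod : u * (sw u k).prod = w * cyc n k r := by
        rw [sw_step u hkn, List.prod_append, ← mul_assoc, hw]
        congr 1
        unfold row cyc ρ
        rw [dif_pos hkn]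
      have hwu : ∀ j : Fin n, j.val ≤ k → w j = u j := fun j hj => ha j (by omega)
      have hwk : w ⟨k, hkn⟩ = u ⟨k, hkn⟩ := hwu _ (by simp)
      -- the two finsets
      set A := univ.filter (fun j : Fin n => k < j.val ∧ u ⟨k, hkn⟩ < w j) with hA
      set B := univ.filter (fun j : Fin n => k < j.val ∧ j.val ≤ k + r) with hB
      have cardA : A.card = r := by
        rw [hA, hr, rowLen_eq]
        apply Finset.card_bij' (fun j _ => u⁻¹ (w j)) (fun t _ => w⁻¹ (u t))
        · intro j hj
          simp only [mem_filter, mem_univ, true_and] at hj ⊢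
          have h2 : u (u⁻¹ (w j)) = w j := u.apply_symm_apply _
          refine ⟨?_, by rw [h2]; exact hj.2⟩
          by_contra hc
          have hle : (u⁻¹ (w j)).val ≤ k := by
            rw [Fin.lt_def] at hc
            simp only [Fin.val_mk] at hc
            omega
          have heq : w (u⁻¹ (w j)) = w j := by rw [hwu _ hle, h2]
          have hj' := w.injective heq
          rw [hj'] at hle
          omega
        · intro t ht
          simp only [mem_filter, mem_univ, true_and] at ht ⊢
          have h2 : w (w⁻¹ (u t)) = u t := w.apply_symm_apply _
          refine ⟨?_, by rw [h2]; exact ht.2⟩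
          by_contra hc
          have hle : (w⁻¹ (u t)).val ≤ k := by omega
          have heq : u (w⁻¹ (u t)) = u t := by rw [← hwu _ hle, h2]
          have ht' := u.injective heq
          rw [ht'] at hle
          rw [Fin.lt_def] at ht
          simp only [Fin.val_mk] at ht
          omega
        · intro j _; simp
        · intro t _; simp
      have cardB : B.card = r := by
        have hBI : B = Finset.Ioc ⟨k, hkn⟩ ⟨k + r, hrn⟩ := by
          ext j
          simp [hB, Finset.mem_Ioc, Fin.lt_def, Fin.le_def]
        rw [hBI, Fin.card_Ioc]
        simp
      have hAB : A = B := by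
        by_cases hsub : A ⊆ B
        · exact Finset.eq_of_subset_of_card_le hsub (by rw [cardA, cardB])
        · obtain ⟨a0, ha0A, ha0B⟩ := Finset.not_subset.mp hsub
          have hBA : B ⊆ A := by
            intro b0 hb0
            simp only [hA, hB, mem_filter, mem_univ, true_and] at ha0A ha0B hb0 ⊢
            refine ⟨hb0.1, ?_⟩
            have ha0r : k + r < a0.val := by
              rcases ha0A with ⟨h1, _⟩
              omega
            have hba : b0 < a0 := by rw [Fin.lt_def]; omega
            have hwb := hb b0 a0 (by omega) hba
            exact lt_trans ha0A.2 hwb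
          exact (Finset.eq_of_subset_of_card_le hBA (by rw [cardA, cardB])).symm
      have I1 : ∀ j : Fin n, k < j.val → j.val ≤ k + r → u ⟨k, hkn⟩ < w j := by
        intro j hj1 hj2
        have hjB : j ∈ B := by simp [hB]; omega
        rw [← hAB] at hjB
        simp only [hA, mem_filter, mem_univ, true_and] at hjB
        exact hjB.2
      have I2 : ∀ j : Fin n, k + r < j.val → w j < u ⟨k, hkn⟩ := by
        intro j hj1
        have hjB : j ∉ B := by simp [hB]; omega
        rw [← hAB] at hjB
        simp only [hA, mem_filter, mem_univ, true_and, not_and, not_lt] at hjB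
        have hle := hjB (by omega)
        have hne : w j ≠ u ⟨k, hkn⟩ := by
          rw [← hwk]
          intro hc
          have := w.injective hc
          rw [this] at hj1
          simp only [Fin.val_mk] at hj1
          omega
        exact lt_of_le_of_ne hle hne
      constructor
      · intro j hj
        rw [hprod, Equiv.Perm.mul_apply, cyc_fix (Or.inl hj)]
        exact hwu j (by omega)
      · intro a b hka hab
        rw [hprod]
        show w (cyc n k r b) < w (cyc n k r a)
        have hab' : a.val < b.val := hab
        rcases Nat.lt_trichotomy a.val (k + r) with hac | hac | hac
        · have hca : (cyc n k r a).val = a.val + 1 := cyc_mid hka hac hrn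
          rcases Nat.lt_trichotomy b.val (k + r) with hbc | hbc | hbc
          · have hcb : (cyc n k r b).val = b.val + 1 := cyc_mid (by omega) hbc hrn
            exact hb _ _ (by omega) (by rw [Fin.lt_def]; omega)
          · have hcb : (cyc n k r b).val = k := cyc_top hbc hrn
            have hcb' : cyc n k r b = ⟨k, hkn⟩ := Fin.ext (by simpa using hcb)
            rw [hcb', hwk]
            exact I1 _ (by omega) (by omega)
          · rw [cyc_fix (Or.inr hbc)]
            exact hb _ _ (by omega) (by rw [Fin.lt_def]; omega)
        · have hca : (cyc n k r a).val = k := cyc_top hac hrn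
          have hca' : cyc n k r a = ⟨k, hkn⟩ := Fin.ext (by simpa using hca)
          rw [hca', hwk, cyc_fix (Or.inr (by omega : k + r < b.val))]
          exact I2 _ (by omega)
        · rw [cyc_fix (Or.inr hac), cyc_fix (Or.inr (by omega : k + r < b.val))]
          exact hb _ _ (by omega) hab

lemma part1 (u : Equiv.Perm (Fin n)) : u * (rotheWord u).prod = Fin.revPerm := by
  obtain ⟨-, hb⟩ := main_inv u n 0 (by omega)
  rw [rotheWord_eq_sw]
  exact eq_revPerm _ (fun a b hab => hb a b (Nat.zero_le _) hab)

lemma invCount_one : invCount (1 : Equiv.Perm (Fin n)) = 0 := by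
  unfold invCount
  rw [Finset.card_eq_zero, Finset.filter_eq_empty_iff]
  rintro p - ⟨h1, h2⟩
  simp only [Equiv.Perm.one_apply] at h2
  exact absurd h2 (lt_asymm h1)

lemma invCount_mul_le (a b : Equiv.Perm (Fin n)) :
    invCount (a * b) ≤ invCount a + invCount b := by
  rw [Nat.add_comm]
  unfold invCount
  rw [← Finset.card_filter_add_card_filter_not
    (p := fun p : Fin n × Fin n => b p.2 < b p.1)
    (s := univ.filter fun p : Fin n × Fin n => p.1 < p.2 ∧ (a * b) p.2 < (a * b) p.1)]
  apply Nat.add_le_add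
  · apply Finset.card_le_card
    intro p hp
    simp only [mem_filter, mem_univ, true_and] at hp ⊢
    exact ⟨hp.1.1, hp.2⟩
  · apply Finset.card_le_card_of_injOn (fun p => (b p.1, b p.2))
    · intro p hp
      rw [Finset.mem_coe, Finset.mem_filter, Finset.mem_filter] at hp
      simp only [mem_coe, mem_filter, mem_univ, true_and, not_lt, Equiv.Perm.mul_apply] at hp ⊢
      obtain ⟨⟨h1, h2⟩, h3⟩ := hp
      have hne : b p.1 ≠ b p.2 := fun hc => (ne_of_lt h1) (b.injective hc)
      exact ⟨lt_of_le_of_ne h3 hne, h2⟩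
    · intro p _ q _ hpq
      have h1 : b p.1 = b q.1 := congrArg Prod.fst hpq
      have h2 : b p.2 = b q.2 := congrArg Prod.snd hpq
      exact Prod.ext (b.injective h1) (b.injective h2)

lemma invCount_sPerm_le (t : ℕ) : invCount (sPerm n t) ≤ 1 := by
  rcases Nat.lt_or_ge (t + 1) n with h | h
  · unfold invCount sPerm
    rw [dif_pos h]
    have hsub : (univ.filter fun p : Fin n × Fin n =>
        p.1 < p.2 ∧ Equiv.swap ⟨t, Nat.lt_of_succ_lt h⟩ ⟨t + 1, h⟩ p.2 <
          Equiv.swap ⟨t, Nat.lt_of_succ_lt h⟩ ⟨t + 1, h⟩ p.1) ⊆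
        {((⟨t, Nat.lt_of_succ_lt h⟩ : Fin n), (⟨t + 1, h⟩ : Fin n))} := by
      intro p hp
      simp only [mem_filter, mem_univ, true_and] at hp
      obtain ⟨h1, h2⟩ := hp
      rw [Equiv.swap_apply_def, Equiv.swap_apply_def] at h2
      simp only [Finset.mem_singleton, Prod.ext_iff]
      split_ifs at h2 <;>
        (simp only [Fin.ext_iff, Fin.lt_def, Fin.val_mk, not_and, not_lt] at * <;> omega)
    calc _ ≤ _ := Finset.card_le_card hsub
      _ = 1 := Finset.card_singleton _
  · unfold sPerm
    rw [dif_neg (by omega)]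
    rw [invCount_one]
    omega

lemma invCount_prod_le (l : List (Equiv.Perm (Fin n)))
    (hl : ∀ s ∈ l, invCount s ≤ 1) : invCount l.prod ≤ l.length := by
  induction l with
  | nil => simp [invCount_one]
  | cons s l ih =>
      rw [List.prod_cons]
      calc invCount (s * l.prod) ≤ invCount s + invCount l.prod := invCount_mul_le _ _
        _ ≤ 1 + l.length :=
            Nat.add_le_add (hl s (by simp)) (ih (fun x hx => hl x (by simp [hx])))
        _ = (s :: l).length := by simp [Nat.add_comm]

lemma mem_rotheWord (u : Equiv.Perm (Fin n)) {s : Equiv.Perm (Fin n)}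
    (hs : s ∈ rotheWord u) : ∃ t, s = sPerm n t := by
  unfold rotheWord at hs
  simp only [List.mem_flatten, List.mem_map, List.mem_reverse] at hs
  obtain ⟨L, ⟨i, -, rfl⟩, hsL⟩ := hs
  simp only [List.mem_map] at hsL
  obtain ⟨h, -, rfl⟩ := hsL
  exact ⟨i.val + h, rfl⟩

lemma length_rotheWord (u : Equiv.Perm (Fin n)) :
    (rotheWord u).length = ∑ i : Fin n, rotheRowLen u i := by
  unfold rotheWord
  rw [List.length_flatten, List.map_map, List.map_reverse, List.sum_reverse,
    Fin.sum_univ_def]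
  congr 1
  apply List.map_congr_left
  intro i _
  simp

lemma sum_rowLen (u : Equiv.Perm (Fin n)) :
    ∑ i : Fin n, rotheRowLen u i
      = (univ.filter fun p : Fin n × Fin n => p.1 < p.2 ∧ u p.1 < u p.2).card := by
  rw [Finset.card_eq_sum_card_fiberwise
    (f := Prod.fst) (t := univ) (fun x _ => mem_univ _)]
  apply Finset.sum_congr rfl
  intro i _
  rw [rowLen_eq]
  apply Finset.card_bij' (fun t _ => (i, t)) (fun p _ => p.2)
  · intro t ht
    simp only [mem_filter, mem_univ, true_and] at ht ⊢
    refine ⟨⟨ht.1, ht.2⟩, ?_⟩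
    try rfl
    try trivial
  · intro p hp
    simp only [mem_filter, mem_univ, true_and] at hp ⊢
    obtain ⟨⟨h1, h2⟩, h3⟩ := hp
    rw [← h3]
    exact ⟨h1, h2⟩
  · intro t _; rfl
  · intro p hp
    simp only [mem_filter] at hp
    exact (Prod.ext hp.2.symm rfl)

lemma split_pairs (u : Equiv.Perm (Fin n)) :
    invCount u + (univ.filter fun p : Fin n × Fin n => p.1 < p.2 ∧ u p.1 < u p.2).card
      = (univ.filter fun p : Fin n × Fin n => p.1 < p.2).card := by
  rw [← Finset.card_filter_add_card_filter_not
    (p := fun p : Fin n × Fin n => u p.2 < u p.1)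
    (s := univ.filter fun p : Fin n × Fin n => p.1 < p.2)]
  congr 1
  · unfold invCount
    rw [Finset.filter_filter]
  · rw [Finset.filter_filter]
    congr 1
    apply Finset.filter_congr
    intro p _
    constructor
    · rintro ⟨h1, h2⟩
      exact ⟨h1, not_lt.mpr (le_of_lt h2)⟩
    · rintro ⟨h1, h2⟩
      refine ⟨h1, lt_of_le_of_ne (not_lt.mp h2) ?_⟩
      intro hc
      exact absurd (u.injective hc) (ne_of_lt h1)

lemma invCount_revPerm :
    invCount (Fin.revPerm : Equiv.Perm (Fin n))
      = (univ.filter fun p : Fin n × Fin n => p.1 < p.2).card := by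
  unfold invCount
  congr 1
  apply Finset.filter_congr
  intro p _
  simp only [Fin.revPerm_apply, Fin.rev_lt_rev, and_self]

end RWaux

/-- Reading the simple transpositions associated to the boxes of the dual Rothe
diagram of `u` row by row from bottom to top and right to left and taking the
product `x`, one gets `u · x = w₀` (the longest permutation, `Fin.revPerm`), and
this expression for `x` is reduced: its length equals the number of letters,
which is the number of boxes of `Rothe(u)`. -/
theorem rothe_word_prod_eq_w0_and_reduced (n : ℕ) (u : Equiv.Perm (Fin n)) :
    u * (rotheWord u).prod = Fin.revPerm ∧
    invCount (rotheWord u).prod = (rotheWord u).length := by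
  open RWaux in
  refine ⟨part1 u, ?_⟩
  have hup : invCount (rotheWord u).prod ≤ (rotheWord u).length :=
    RWaux.invCount_prod_le _ (fun s hs => by
      obtain ⟨t, rfl⟩ := RWaux.mem_rotheWord u hs
      exact RWaux.invCount_sPerm_le t)
  have hsub := RWaux.invCount_mul_le u (rotheWord u).prod
  rw [RWaux.part1 u, RWaux.invCount_revPerm, ← RWaux.split_pairs u] at hsub
  have hlen := RWaux.length_rotheWord u
  have hsum := RWaux.sum_rowLen u
  omega
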